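/- Let φ: (0,∞) → ℝ be continuously differentiable and strictly increasing with derivative Φ bounded away from 0 on every interval (0,M], and let f(R₁,...,R_d) = λ·∏ᵢ 1/(1+Rᵢ) for λ > 0. Define f^φ(x₁,...,x_d) = φ(f(φ⁻¹(x₁),...,φ⁻¹(x_d))). Then for any x, y in (φ((0,∞)))^d there exists z ∈ (0,∞)^d such that |f^φ(x) - f^φ(y)| ≤ f(z)·Φ(f(z))·∑ᵢ |yᵢ - xᵢ|/((1+zᵢ)·Φ(zᵢ)). -/

import Mathlib

set_option maxHeartbeats 1000000


theorem mean_value_lemma (d : ℕ) (hd : 0 < d) (lam : ℝ) (hlam : 0 < lam)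
    (φ Φ ψ : ℝ → ℝ)
    (hmono : StrictMonoOn φ (Set.Ioi 0))
    (hderiv : ∀ x ∈ Set.Ioi (0 : ℝ), HasDerivAt φ (Φ x) x)
    (hΦcont : ContinuousOn Φ (Set.Ioi 0))
    (hΦpos : ∀ M > (0 : ℝ), ∃ c > (0 : ℝ), ∀ x ∈ Set.Ioc (0 : ℝ) M, c ≤ Φ x)
    (hψ : ∀ x ∈ Set.Ioi (0 : ℝ), ψ (φ x) = x)
    (f : (Fin d → ℝ) → ℝ) (hf : f = fun R => lam * ∏ i, 1 / (1 + R i))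
    (fφ : (Fin d → ℝ) → ℝ) (hfφ : fφ = fun x => φ (f (fun i => ψ (x i))))
    (x y : Fin d → ℝ)
    (hx : ∀ i, x i ∈ φ '' Set.Ioi 0) (hy : ∀ i, y i ∈ φ '' Set.Ioi 0) :
    ∃ z : Fin d → ℝ, (∀ i, 0 < z i) ∧
      |fφ x - fφ y| ≤ f z * Φ (f z) * ∑ i, |y i - x i| / ((1 + z i) * Φ (z i)) := by
  have hφc : ContinuousOn φ (Set.Ioi 0) := fun u hu =>
    (hderiv u hu).continuousAt.continuousWithinAt
  have hΦpos' : ∀ u : ℝ, 0 < u → 0 < Φ u := by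
    intro u hu
    obtain ⟨cc, hcc, hle⟩ := hΦpos u hu
    exact lt_of_lt_of_le hcc (hle u ⟨hu, le_refl u⟩)
  -- derivative of the inverse function ψ
  have hψder : ∀ u ∈ Set.Ioi (0 : ℝ), HasDerivAt ψ (Φ u)⁻¹ (φ u) := by
    intro u hu
    have hu0 : (0 : ℝ) < u := hu
    have hl : (0 : ℝ) < u / 2 := by linarith
    have hlu : u / 2 < u := by linarith
    have hur : u < u + 1 := by linarith
    have hlmem : u / 2 ∈ Set.Ioi (0 : ℝ) := hl
    have humem : u ∈ Set.Ioi (0 : ℝ) := hu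
    have hrmem : u + 1 ∈ Set.Ioi (0 : ℝ) := by
      simp only [Set.mem_Ioi]; linarith
    have hsub : Set.Icc (u / 2) (u + 1) ⊆ Set.Ioi 0 := fun v hv => lt_of_lt_of_le hl hv.1
    have hIoo : Set.Ioo (φ (u / 2)) (φ (u + 1)) ⊆ φ '' Set.Ioo (u / 2) (u + 1) :=
      intermediate_value_Ioo (by linarith) (hφc.mono hsub)
    have hmem : φ u ∈ Set.Ioo (φ (u / 2)) (φ (u + 1)) :=
      ⟨hmono hlmem humem hlu, hmono humem hrmem hur⟩
    have hnhds : Set.Ioo (φ (u / 2)) (φ (u + 1)) ∈ nhds (φ u) := Ioo_mem_nhds hmem.1 hmem.2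
    have hinv : ∀ q ∈ Set.Ioo (φ (u / 2)) (φ (u + 1)), φ (ψ q) = q := by
      intro q hq
      obtain ⟨w, hw, hwq⟩ := hIoo hq
      have hw0 : w ∈ Set.Ioi (0 : ℝ) := lt_trans hl hw.1
      rw [← hwq, hψ w hw0]
    have hcont : ContinuousAt ψ (φ u) := by
      apply StrictMonoOn.continuousAt_of_image_mem_nhds
        (s := Set.Ioo (φ (u / 2)) (φ (u + 1))) ?_ hnhds ?_
      · intro p hp q hq hpq
        obtain ⟨wp, hwp, rfl⟩ := hIoo hp
        obtain ⟨wq, hwq, rfl⟩ := hIoo hq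
        have hwp0 : wp ∈ Set.Ioi (0 : ℝ) := lt_trans hl hwp.1
        have hwq0 : wq ∈ Set.Ioi (0 : ℝ) := lt_trans hl hwq.1
        rw [hψ wp hwp0, hψ wq hwq0]
        by_contra hcon
        push_neg at hcon
        exact absurd (hmono.monotoneOn hwq0 hwp0 hcon) (not_le_of_gt hpq)
      · rw [hψ u hu]
        have hss : Set.Ioo (u / 2) (u + 1) ⊆ ψ '' Set.Ioo (φ (u / 2)) (φ (u + 1)) := by
          intro w hw
          have hw0 : w ∈ Set.Ioi (0 : ℝ) := lt_trans hl hw.1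
          exact ⟨φ w, ⟨hmono hlmem hw0 hw.1, hmono hw0 hrmem hw.2⟩, hψ w hw0⟩
        exact Filter.mem_of_superset (Ioo_mem_nhds hlu hur) hss
    have hΦne : Φ u ≠ 0 := ne_of_gt (hΦpos' u hu0)
    have hder2 : HasDerivAt φ (Φ u) (ψ (φ u)) := by rw [hψ u hu]; exact hderiv u hu
    exact HasDerivAt.of_local_left_inverse hcont hder2 hΦne
      (Filter.eventually_of_mem hnhds hinv)
  choose a ha hax using hx
  choose b hb hby using hy
  set c : ℝ → Fin d → ℝ := fun t i => ψ ((1 - t) * y i + t * x i) with hc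
  have hseg : ∀ i : Fin d, ∀ t ∈ Set.Icc (0 : ℝ) 1,
      ∃ u ∈ Set.Ioi (0 : ℝ), φ u = (1 - t) * y i + t * x i ∧ c t i = u := by
    intro i t ht
    set m := min (a i) (b i) with hm
    set M := max (a i) (b i) with hM
    have hm0 : 0 < m := lt_min (ha i) (hb i)
    have hsub : Set.Icc m M ⊆ Set.Ioi 0 := fun v hv => lt_of_lt_of_le hm0 hv.1
    have hmM : m ≤ M := min_le_max
    have hmono' := hmono.monotoneOn
    have hMmem : M ∈ Set.Ioi (0 : ℝ) := hsub ⟨hmM, le_refl M⟩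
    have h1 : φ m ≤ x i := by
      rw [← hax i]; exact hmono' hm0 (ha i) (min_le_left _ _)
    have h2 : φ m ≤ y i := by
      rw [← hby i]; exact hmono' hm0 (hb i) (min_le_right _ _)
    have h3 : x i ≤ φ M := by
      rw [← hax i]; exact hmono' (ha i) hMmem (le_max_left _ _)
    have h4 : y i ≤ φ M := by
      rw [← hby i]; exact hmono' (hb i) hMmem (le_max_right _ _)
    have hp1 : φ m ≤ (1 - t) * y i + t * x i := by
      nlinarith [mul_nonneg (by linarith [ht.2] : (0:ℝ) ≤ 1 - t) (by linarith : (0:ℝ) ≤ y i - φ m),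
        mul_nonneg ht.1 (by linarith : (0:ℝ) ≤ x i - φ m)]
    have hp2 : (1 - t) * y i + t * x i ≤ φ M := by
      nlinarith [mul_nonneg (by linarith [ht.2] : (0:ℝ) ≤ 1 - t) (by linarith : (0:ℝ) ≤ φ M - y i),
        mul_nonneg ht.1 (by linarith : (0:ℝ) ≤ φ M - x i)]
    obtain ⟨u, hu, hup⟩ := intermediate_value_Icc hmM (hφc.mono hsub) ⟨hp1, hp2⟩
    refine ⟨u, hsub hu, hup, ?_⟩
    show ψ ((1 - t) * y i + t * x i) = u
    rw [← hup, hψ u (hsub hu)]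
  have hcpos : ∀ t ∈ Set.Icc (0 : ℝ) 1, ∀ i, 0 < c t i := by
    intro t ht i
    obtain ⟨u, hu, _, hcu⟩ := hseg i t ht
    rw [hcu]; exact hu
  have hcder : ∀ t ∈ Set.Icc (0 : ℝ) 1, ∀ i : Fin d,
      HasDerivAt (fun s => c s i) ((Φ (c t i))⁻¹ * (x i - y i)) t := by
    intro t ht i
    obtain ⟨u, hu, hup, hcu⟩ := hseg i t ht
    have hinner : HasDerivAt (fun s : ℝ => (1 - s) * y i + s * x i) (x i - y i) t := by
      have heq : (fun s : ℝ => (1 - s) * y i + s * x i) = fun s => y i + (x i - y i) * s := by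
        funext s; ring
      rw [heq]
      simpa using ((hasDerivAt_id t).const_mul (x i - y i)).const_add (y i)
    have houter : HasDerivAt ψ (Φ (c t i))⁻¹ ((1 - t) * y i + t * x i) := by
      rw [hcu, ← hup]
      exact hψder u hu
    exact houter.comp t hinner
  set g : ℝ → ℝ := fun t => φ (lam * ∏ i, (1 + c t i)⁻¹) with hgdef
  set g' : ℝ → ℝ := fun t => Φ (lam * ∏ i, (1 + c t i)⁻¹) *
      (lam * ∑ i, (∏ j ∈ Finset.univ.erase i, (1 + c t j)⁻¹) *
        (-((Φ (c t i))⁻¹ * (x i - y i)) / (1 + c t i) ^ 2)) with hg'def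
  have hval_pos : ∀ t ∈ Set.Icc (0 : ℝ) 1, 0 < lam * ∏ i, (1 + c t i)⁻¹ := by
    intro t ht
    apply mul_pos hlam
    apply Finset.prod_pos
    intro i _
    have := hcpos t ht i
    positivity
  have hgder : ∀ t ∈ Set.Icc (0 : ℝ) 1, HasDerivAt g (g' t) t := by
    intro t ht
    have hprod : HasDerivAt (fun s => ∏ i, (1 + c s i)⁻¹)
        (∑ i, (∏ j ∈ Finset.univ.erase i, (1 + c t j)⁻¹) •
          (-((Φ (c t i))⁻¹ * (x i - y i)) / (1 + c t i) ^ 2)) t := by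
      apply HasDerivAt.fun_finsetProd
      intro i _
      have h1 : HasDerivAt (fun s => 1 + c s i) ((Φ (c t i))⁻¹ * (x i - y i)) t :=
        (hcder t ht i).const_add 1
      exact h1.inv (by have := hcpos t ht i; positivity)
    have hmul := hprod.const_mul lam
    have houter : HasDerivAt φ (Φ (lam * ∏ i, (1 + c t i)⁻¹)) (lam * ∏ i, (1 + c t i)⁻¹) :=
      hderiv _ (hval_pos t ht)
    have hcomp := houter.comp t hmul
    simp only [smul_eq_mul] at hcomp ⊢
    exact hcomp
  obtain ⟨t₀, ht₀, hslope⟩ := exists_hasDerivAt_eq_slope g g' one_pos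
    (fun t ht => (hgder t ht).continuousAt.continuousWithinAt)
    (fun t ht => hgder t (Set.Ioo_subset_Icc_self ht))
  have ht₀' : t₀ ∈ Set.Icc (0 : ℝ) 1 := Set.Ioo_subset_Icc_self ht₀
  have hz : ∀ i, 0 < c t₀ i := hcpos t₀ ht₀'
  have hzval : lam * ∏ i, (1 + c t₀ i)⁻¹ = f (c t₀) := by
    rw [hf]; simp only [one_div]
  have hfz : 0 < f (c t₀) := by rw [← hzval]; exact hval_pos t₀ ht₀'
  have hΦfz : 0 < Φ (f (c t₀)) := hΦpos' _ hfz
  have hgx : g 1 = fφ x := by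
    have hcx : ∀ i : Fin d, c 1 i = ψ (x i) := by
      intro i; show ψ ((1 - 1) * y i + 1 * x i) = ψ (x i); norm_num
    rw [hgdef, hfφ, hf]
    simp only [hcx, one_div]
  have hgy : g 0 = fφ y := by
    have hcy : ∀ i : Fin d, c 0 i = ψ (y i) := by
      intro i; show ψ ((1 - 0) * y i + 0 * x i) = ψ (y i); norm_num
    rw [hgdef, hfφ, hf]
    simp only [hcy, one_div]
  refine ⟨c t₀, hz, ?_⟩
  have hdiff : fφ x - fφ y = g' t₀ := by
    rw [← hgx, ← hgy, hslope]; norm_num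
  rw [hdiff, hg'def]
  simp only []
  rw [hzval]
  -- now bound |Φ (f (c t₀)) * (lam * ∑ ...)|
  have hterm : ∀ i : Fin d, lam * |(∏ j ∈ Finset.univ.erase i, (1 + c t₀ j)⁻¹) *
      (-((Φ (c t₀ i))⁻¹ * (x i - y i)) / (1 + c t₀ i) ^ 2)|
      = f (c t₀) * (|y i - x i| / ((1 + c t₀ i) * Φ (c t₀ i))) := by
    intro i
    have h1 : (0 : ℝ) < 1 + c t₀ i := by have := hz i; linarith
    have h2 : (0 : ℝ) < Φ (c t₀ i) := hΦpos' _ (hz i)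
    have h3 : (0 : ℝ) < ∏ j ∈ Finset.univ.erase i, (1 + c t₀ j)⁻¹ :=
      Finset.prod_pos (fun j _ => by have := hz j; positivity)
    have h4 : f (c t₀) = lam * (∏ j ∈ Finset.univ.erase i, (1 + c t₀ j)⁻¹) * (1 + c t₀ i)⁻¹ := by
      rw [hf]
      simp only [one_div]
      rw [← Finset.prod_erase_mul Finset.univ _ (Finset.mem_univ i)]
      ring
    rw [abs_mul, abs_div, abs_neg, abs_mul, abs_of_pos h3, abs_of_pos (inv_pos.2 h2),
      abs_of_pos (pow_pos h1 2), abs_sub_comm, h4]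
    field_simp
  have habs : |∑ i, (∏ j ∈ Finset.univ.erase i, (1 + c t₀ j)⁻¹) *
      (-((Φ (c t₀ i))⁻¹ * (x i - y i)) / (1 + c t₀ i) ^ 2)|
      ≤ ∑ i, |(∏ j ∈ Finset.univ.erase i, (1 + c t₀ j)⁻¹) *
      (-((Φ (c t₀ i))⁻¹ * (x i - y i)) / (1 + c t₀ i) ^ 2)| :=
    Finset.abs_sum_le_sum_abs _ _
  have hsum : lam * ∑ i, |(∏ j ∈ Finset.univ.erase i, (1 + c t₀ j)⁻¹) *
      (-((Φ (c t₀ i))⁻¹ * (x i - y i)) / (1 + c t₀ i) ^ 2)|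
      = f (c t₀) * ∑ i, |y i - x i| / ((1 + c t₀ i) * Φ (c t₀ i)) := by
    rw [Finset.mul_sum, Finset.mul_sum]
    exact Finset.sum_congr rfl (fun i _ => hterm i)
  calc |Φ (f (c t₀)) * (lam * ∑ i, (∏ j ∈ Finset.univ.erase i, (1 + c t₀ j)⁻¹) *
      (-((Φ (c t₀ i))⁻¹ * (x i - y i)) / (1 + c t₀ i) ^ 2))|
      = Φ (f (c t₀)) * (lam * |∑ i, (∏ j ∈ Finset.univ.erase i, (1 + c t₀ j)⁻¹) *
        (-((Φ (c t₀ i))⁻¹ * (x i - y i)) / (1 + c t₀ i) ^ 2)|) := by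
        rw [abs_mul, abs_mul, abs_of_pos hΦfz, abs_of_pos hlam]
    _ ≤ Φ (f (c t₀)) * (lam * ∑ i, |(∏ j ∈ Finset.univ.erase i, (1 + c t₀ j)⁻¹) *
        (-((Φ (c t₀ i))⁻¹ * (x i - y i)) / (1 + c t₀ i) ^ 2)|) := by
        apply mul_le_mul_of_nonneg_left _ hΦfz.le
        exact mul_le_mul_of_nonneg_left habs hlam.le
    _ = f (c t₀) * Φ (f (c t₀)) * ∑ i, |y i - x i| / ((1 + c t₀ i) * Φ (c t₀ i)) := by
        rw [hsum]; ring
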